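/- Consider GCN layers H^{(l+1)} = σ(Ã H^{(l)} W^{(l)}) with H^{(0)} = X and σ applied entrywise. If two nodes i and j are indistinguishable under l iterations of the 1-WL test (with initial colors given by rows of X and edge weights of Ã), then H_i^{(l)} = H_j^{(l)} for every choice of weight matrices W^{(0)}, …, W^{(l-1)}. -/
import Mathlib


/-- GCN layers `H^{(l+1)} = σ(Ã H^{(l)} W^{(l)})` with `H^{(0)} = X`, `σ` entrywise. -/
noncomputable def gcnH {n d : ℕ} (A : Matrix (Fin n) (Fin n) ℝ)
    (X : Matrix (Fin n) (Fin d) ℝ) (σ : ℝ → ℝ)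
    (W : ℕ → Matrix (Fin d) (Fin d) ℝ) : ℕ → Matrix (Fin n) (Fin d) ℝ
  | 0 => X
  | l + 1 => (A * gcnH A X σ W l * W l).map σ

/-- If nodes `i, j` are indistinguishable under `l` iterations of the 1-WL test
(injective hash, initial colors determined exactly by the rows of `X`, refinement over the
edge weights of `Ã`), then `H^{(l)}_i = H^{(l)}_j` for every choice of weight matrices. -/
theorem stmt9 {n d : ℕ} {C : Type*}
    (A : Matrix (Fin n) (Fin n) ℝ) (X : Matrix (Fin n) (Fin d) ℝ) (σ : ℝ → ℝ)
    (c : ℕ → Fin n → C)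
    (Hash : Multiset (ℝ × C) → C) (hHash : Function.Injective Hash)
    (hc0 : ∀ i j, c 0 i = c 0 j ↔ X i = X j)
    (hrec : ∀ l i, c (l + 1) i = Hash (Finset.univ.val.map fun u => (A i u, c l u)))
    (l : ℕ) (i j : Fin n) (hij : c l i = c l j) :
    ∀ W : ℕ → Matrix (Fin d) (Fin d) ℝ, gcnH A X σ W l i = gcnH A X σ W l j := by
  intro W
  induction l generalizing i j with
  | zero => exact (hc0 i j).mp hij
  | succ l ih =>
    classical
    have hmul : (Finset.univ.val.map fun u => (A i u, c l u))
        = (Finset.univ.val.map fun u => (A j u, c l u)) := by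
      apply hHash
      rw [← hrec, ← hrec, hij]
    set H := gcnH A X σ W l with hH
    set φ : ℝ × C → (Fin d → ℝ) := fun p =>
      if h : ∃ u, c l u = p.2 then p.1 • H h.choose else 0 with hφdef
    have hφ : ∀ (a : ℝ) (u : Fin n), φ (a, c l u) = a • H u := by
      intro a u
      have h : ∃ v, c l v = c l u := ⟨u, rfl⟩
      simp only [hφdef, dif_pos h]
      rw [ih h.choose u h.choose_spec]
    have e : ∀ b : Fin n → ℝ,
        ((Finset.univ.val.map fun u => (b u, c l u)).map φ).sum = ∑ u, b u • H u := by
      intro b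
      rw [Multiset.map_map, Finset.sum]
      congr 1
      exact Multiset.map_congr rfl fun u _ => hφ (b u) u
    have hsum : (∑ u, A i u • H u) = ∑ u, A j u • H u := by
      rw [← e (A i ·), ← e (A j ·), hmul]
    funext k
    show σ ((A * H * W l) i k) = σ ((A * H * W l) j k)
    have hrow : ∀ m, (A * H) i m = (A * H) j m := by
      intro m
      have := congrFun hsum m
      simpa [Finset.sum_apply, Matrix.mul_apply] using this
    simp only [Matrix.mul_apply]
    congr 1
    exact Finset.sum_congr rfl fun m _ => by
      have := hrow m; simp only [Matrix.mul_apply] at this; rw [this]
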